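/- Let 0 < α < 1, 1 < β ≤ 2, μ_α ≥ 0 and μ_β < 0, and let m ≥ 2. Then, with D = μ_α(A + Aᵀ) + μ_β(B + Bᵀ), the matrix I + D is invertible and, in the spectral norm, ‖(I + D)^{-1}‖ ≤ 1 and ‖(I + D)^{-1}(I - D)‖ ≤ 1. -/

import Mathlib

/-- Grünwald–Letnikov coefficients: `g γ 0 = 1`, `g γ k = (1 - (γ+1)/k) * g γ (k-1)`. -/
noncomputable def g (γ : ℝ) : ℕ → ℝ
  | 0 => 1
  | k + 1 => (1 - (γ + 1) / ((k : ℝ) + 1)) * g γ k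

/-- WSGD coefficients: `w γ 0 = (γ/2) g γ 0`, `w γ k = (γ/2) g γ k + ((2-γ)/2) g γ (k-1)`. -/
noncomputable def w (γ : ℝ) : ℕ → ℝ
  | 0 => γ / 2 * g γ 0
  | k + 1 => γ / 2 * g γ (k + 1) + (2 - γ) / 2 * g γ k

/-- The `(m-1) × (m-1)` lower-Hessenberg Toeplitz matrix with entries
`w_{i-j+1}^{(γ)}` for `j ≤ i+1` (1-based indices) and `0` otherwise. -/
noncomputable def wsgdMatrix (γ : ℝ) (m : ℕ) : Matrix (Fin (m - 1)) (Fin (m - 1)) ℝ :=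
  fun i j => if (j : ℕ) ≤ (i : ℕ) + 1 then w γ ((i : ℕ) + 1 - (j : ℕ)) else 0

/-- The Crank–Nicolson matrix `D = μ_α (A + Aᵀ) + μ_β (B + Bᵀ)`. -/
noncomputable def matD (α β μα μβ : ℝ) (m : ℕ) : Matrix (Fin (m - 1)) (Fin (m - 1)) ℝ :=
  μα • (wsgdMatrix α m + Matrix.transpose (wsgdMatrix α m)) + μβ • (wsgdMatrix β m + Matrix.transpose (wsgdMatrix β m))

lemma g_zero (γ : ℝ) : g γ 0 = 1 := rfl
lemma g_succ (γ : ℝ) (k : ℕ) : g γ (k+1) = (1 - (γ + 1) / ((k : ℝ) + 1)) * g γ k := rfl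

/-- `(n+1) g γ (n+1) = -γ * g (γ-1) n`. -/
lemma g_shift (γ : ℝ) : ∀ n : ℕ, ((n : ℝ) + 1) * g γ (n+1) = -γ * g (γ-1) n := by
  intro n
  induction n with
  | zero => simp [g_succ, g_zero]
  | succ n ih =>
    have hn : ((n : ℝ) + 1) ≠ 0 := by positivity
    have hn2 : ((n : ℝ) + 2) ≠ 0 := by positivity
    rw [g_succ γ (n+1), g_succ (γ-1) n]
    push_cast
    push_cast at ih
    field_simp at ih ⊢
    linear_combination ((n:ℝ) + 1 - γ) * ih

/-- Partial sums of `g γ` are given by `g (γ-1)`. -/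
lemma g_sum (γ : ℝ) : ∀ n : ℕ, ∑ k ∈ Finset.range (n+1), g γ k = g (γ-1) n := by
  intro n
  induction n with
  | zero => simp [g_zero]
  | succ n ih =>
    rw [Finset.sum_range_succ, ih, g_succ (γ-1) n]
    have hn : ((n : ℝ) + 1) ≠ 0 := by positivity
    have := g_shift γ n
    field_simp at this ⊢
    linear_combination this

lemma g_diff (γ : ℝ) (n : ℕ) : g (γ-1) (n+1) = g (γ-1) n + g γ (n+1) := by
  have h1 := g_sum γ (n+1)
  rw [Finset.sum_range_succ, g_sum γ n] at h1
  linarith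

lemma g_nonpos {γ : ℝ} (h0 : 0 ≤ γ) (h1 : γ ≤ 1) : ∀ k, 1 ≤ k → g γ k ≤ 0 := by
  intro k hk
  induction k with
  | zero => omega
  | succ k ih =>
    rcases Nat.eq_or_lt_of_le hk with h | h
    · have : k = 0 := by omega
      subst this
      simp [g_succ, g_zero]; linarith
    · have hk1 : 1 ≤ k := by omega
      have hg := ih hk1
      rw [g_succ]
      have hfac : 0 ≤ 1 - (γ + 1) / ((k : ℝ) + 1) := by
        have hk2 : (2:ℝ) ≤ (k:ℝ) + 1 := by
          have : (1:ℝ) ≤ (k:ℝ) := by exact_mod_cast hk1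
          linarith
        have : (γ + 1) / ((k : ℝ) + 1) ≤ 1 := by
          rw [div_le_one (by linarith)]
          linarith
        linarith
      exact mul_nonpos_of_nonneg_of_nonpos hfac hg

lemma g_nonneg_neg {γ : ℝ} (h0 : -1 ≤ γ) (h1 : γ ≤ 0) : ∀ k, 0 ≤ g γ k := by
  intro k
  induction k with
  | zero => simp [g_zero]
  | succ k ih =>
    rw [g_succ]
    have hfac : 0 ≤ 1 - (γ + 1) / ((k : ℝ) + 1) := by
      have hk1 : (1:ℝ) ≤ (k:ℝ) + 1 := by
        have : (0:ℝ) ≤ (k:ℝ) := Nat.cast_nonneg k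
        linarith
      have : (γ + 1) / ((k : ℝ) + 1) ≤ 1 := by
        rw [div_le_one (by linarith)]
        linarith
      linarith
    exact mul_nonneg hfac ih

lemma g_nonneg_two {γ : ℝ} (h1 : 1 ≤ γ) (h2 : γ ≤ 2) : ∀ k, 2 ≤ k → 0 ≤ g γ k := by
  intro k hk
  induction k with
  | zero => omega
  | succ k ih =>
    rcases Nat.eq_or_lt_of_le hk with h | h
    · have : k = 1 := by omega
      subst this
      simp [g_succ, g_zero]
      nlinarith
    · have hk2 : 2 ≤ k := by omega
      have hg := ih hk2
      rw [g_succ]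
      have hfac : 0 ≤ 1 - (γ + 1) / ((k : ℝ) + 1) := by
        have hk3 : (3:ℝ) ≤ (k:ℝ) + 1 := by
          have : (2:ℝ) ≤ (k:ℝ) := by exact_mod_cast hk2
          linarith
        have : (γ + 1) / ((k : ℝ) + 1) ≤ 1 := by
          rw [div_le_one (by linarith)]
          linarith
        linarith
      exact mul_nonneg hfac hg

lemma w_zero (γ : ℝ) : w γ 0 = γ / 2 := by simp [w, g_zero]
lemma w_succ (γ : ℝ) (k : ℕ) : w γ (k+1) = γ / 2 * g γ (k + 1) + (2 - γ) / 2 * g γ k := rfl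

lemma w_sum (γ : ℝ) : ∀ n : ℕ, ∑ k ∈ Finset.range (n+2), w γ k
    = γ/2 * g (γ-1) (n+1) + (2-γ)/2 * g (γ-1) n := by
  intro n
  induction n with
  | zero =>
    rw [show (0+2) = 2 from rfl, Finset.sum_range_succ, Finset.sum_range_one, w_zero, w_succ]
    simp [g_succ, g_zero]
    ring
  | succ n ih =>
    rw [Finset.sum_range_succ, ih, w_succ, g_diff γ (n+1), g_diff γ n]
    ring

lemma g_one (γ : ℝ) : g γ 1 = -γ := by simp [g_succ, g_zero]
lemma g_two (γ : ℝ) : g γ 2 = (1 - (γ+1)/2) * (-γ) := by rw [g_succ, g_one]; norm_num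

lemma w_one (γ : ℝ) : w γ 1 = γ/2 * (-γ) + (2-γ)/2 := by
  rw [w_succ, g_one, g_zero]; ring

lemma w_two (γ : ℝ) : w γ 2 = γ/2 * ((1 - (γ+1)/2) * (-γ)) + (2-γ)/2 * (-γ) := by
  rw [w_succ, g_two, g_one]

section Alpha
variable {α : ℝ} (hα0 : 0 < α) (hα1 : α < 1)
include hα0 hα1

lemma w_alpha_one : 0 ≤ w α 1 := by rw [w_one]; nlinarith

lemma w_alpha_02 : w α 0 + w α 2 ≤ 0 := by
  rw [w_zero, w_two]
  nlinarith [mul_nonneg (mul_nonneg hα0.le (by linarith : (0:ℝ) ≤ α + 2)) (by linarith : (0:ℝ) ≤ 1 - α)]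

lemma w_alpha_k {k : ℕ} (hk : 3 ≤ k) : w α k ≤ 0 := by
  obtain ⟨k', rfl⟩ : ∃ k', k = k' + 1 := ⟨k - 1, by omega⟩
  rw [w_succ]
  have h1 : g α (k' + 1) ≤ 0 := g_nonpos hα0.le hα1.le _ (by omega)
  have h2 : g α k' ≤ 0 := g_nonpos hα0.le hα1.le _ (by omega)
  nlinarith

lemma w_alpha_sum (n : ℕ) : 0 ≤ ∑ k ∈ Finset.range (n+1), w α k := by
  cases n with
  | zero => simp [w_zero]; linarith
  | succ n =>
    rw [show n+1+1 = n+2 from rfl, w_sum]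
    have h1 : 0 ≤ g (α-1) (n+1) := g_nonneg_neg (by linarith) (by linarith) _
    have h2 : 0 ≤ g (α-1) n := g_nonneg_neg (by linarith) (by linarith) _
    nlinarith

end Alpha

section Beta
variable {β : ℝ} (hβ1 : 1 < β) (hβ2 : β ≤ 2)
include hβ1 hβ2

lemma w_beta_one : w β 1 ≤ 0 := by rw [w_one]; nlinarith

lemma w_beta_02 : 0 ≤ w β 0 + w β 2 := by
  rw [w_zero, w_two]
  nlinarith [mul_nonneg (mul_nonneg (by linarith : (0:ℝ) ≤ β) (by linarith : (0:ℝ) ≤ β + 2)) (by linarith : (0:ℝ) ≤ β - 1)]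

lemma w_beta_k {k : ℕ} (hk : 3 ≤ k) : 0 ≤ w β k := by
  obtain ⟨k', rfl⟩ : ∃ k', k = k' + 1 := ⟨k - 1, by omega⟩
  rw [w_succ]
  have h1 : 0 ≤ g β (k' + 1) := g_nonneg_two hβ1.le hβ2 _ (by omega)
  have h2 : 0 ≤ g β k' := g_nonneg_two hβ1.le hβ2 _ (by omega)
  nlinarith

lemma w_beta_sum {n : ℕ} (hn : 2 ≤ n) : ∑ k ∈ Finset.range (n+1), w β k ≤ 0 := by
  obtain ⟨n', rfl⟩ : ∃ n', n = n' + 1 := ⟨n - 1, by omega⟩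
  rw [show n'+1+1 = n'+2 from rfl, w_sum]
  have h1 : g (β-1) (n'+1) ≤ 0 := g_nonpos (by linarith) (by linarith) _ (by omega)
  have h2 : g (β-1) n' ≤ 0 := g_nonpos (by linarith) (by linarith) _ (by omega)
  nlinarith

end Beta

section Row

noncomputable def uaux (v : ℕ → ℝ) : ℕ → ℝ := fun d => if d = 1 then -(v 0 + v 2) else -(v (d+1))

noncomputable def Eaux (v : ℕ → ℝ) (i j : ℕ) : ℝ :=
  (if j ≤ i+1 then v (i+1-j) else 0) + (if i ≤ j+1 then v (j+1-i) else 0)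

variable {v : ℕ → ℝ}
variable (hv1 : 0 ≤ v 1) (hv02 : v 0 + v 2 ≤ 0) (hv3 : ∀ k, 3 ≤ k → v k ≤ 0)
  (hS : ∀ n, 2 ≤ n → 0 ≤ ∑ k ∈ Finset.range (n+1), v k)

lemma Eaux_symm (i j : ℕ) : Eaux v i j = Eaux v j i := by rw [Eaux, Eaux]; exact add_comm _ _

include hv02 hv3 in
lemma Eaux_abs_lt {i j : ℕ} (h : j < i) : |Eaux v i j| = uaux v (i - j) := by
  rcases Nat.eq_or_lt_of_le h with he | hlt
  · -- i = j + 1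
    have hij : i = j + 1 := by omega
    subst hij
    rw [Eaux, if_pos (by omega), if_pos (by omega)]
    rw [show j+1+1-j = 2 by omega, show j+1-(j+1) = 0 by omega]
    rw [uaux, if_pos (by omega)]
    rw [abs_of_nonpos (by linarith)]
    ring
  · -- j + 2 ≤ i
    have hd : 2 ≤ i - j := by omega
    rw [Eaux, if_pos (by omega), if_neg (by omega)]
    rw [show i+1-j = (i-j)+1 by omega, add_zero]
    rw [uaux, if_neg (by omega)]
    rw [show i-j+1 = (i-j)+1 from rfl]
    exact abs_of_nonpos (hv3 _ (by omega))

include hv02 in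
lemma uaux_sum_eq : ∀ N : ℕ, ∑ d ∈ Finset.range (N+1), uaux v (d+1)
    = v 1 - ∑ k ∈ Finset.range (N+3), v k := by
  intro N
  induction N with
  | zero =>
    simp [Finset.sum_range_succ, uaux]
    ring
  | succ N ih =>
    have hrhs : ∑ k ∈ Finset.range (N+1+3), v k = ∑ k ∈ Finset.range (N+3), v k + v (N+3) := by
      rw [show N+1+3 = (N+3)+1 from rfl, Finset.sum_range_succ]
    rw [Finset.sum_range_succ, ih, hrhs, uaux, if_neg (by omega), show N+1+1+1 = N+3 from rfl]
    ring

include hv1 hv02 hS in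
lemma uaux_sum (N : ℕ) : ∑ d ∈ Finset.range N, uaux v (d+1) ≤ v 1 := by
  cases N with
  | zero => simpa using hv1
  | succ N =>
    rw [uaux_sum_eq hv02]
    have := hS (N+2) (by omega)
    rw [show N+2+1 = N+3 from rfl] at this
    linarith

include hv1 hv02 hv3 hS in
lemma row_bound {n i : ℕ} (hi : i < n) :
    ∑ j ∈ (Finset.range n).erase i, |Eaux v i j| ≤ 2 * v 1 := by
  have hsplit : ∑ j ∈ (Finset.range n).erase i, |Eaux v i j|
      = ∑ j ∈ Finset.range i, |Eaux v i j| + ∑ j ∈ Finset.Ico (i+1) n, |Eaux v i j| := by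
    have h1 : ∑ j ∈ Finset.range (i+1), |Eaux v i j| + ∑ j ∈ Finset.Ico (i+1) n, |Eaux v i j|
        = ∑ j ∈ Finset.range n, |Eaux v i j| := by
      rw [Finset.range_eq_Ico, Finset.range_eq_Ico]
      exact Finset.sum_Ico_consecutive _ (Nat.zero_le _) hi
    rw [Finset.sum_erase_eq_sub (Finset.mem_range.mpr hi), ← h1, Finset.sum_range_succ]
    ring
  have hleft : ∑ j ∈ Finset.range i, |Eaux v i j| = ∑ d ∈ Finset.range i, uaux v (d+1) := by
    rw [← Finset.sum_range_reflect (fun d => uaux v (d+1)) i]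
    refine Finset.sum_congr rfl fun j hj => ?_
    rw [Finset.mem_range] at hj
    rw [Eaux_abs_lt hv02 hv3 hj, show i - 1 - j + 1 = i - j by omega]
  have hright : ∑ j ∈ Finset.Ico (i+1) n, |Eaux v i j|
      = ∑ d ∈ Finset.range (n - (i+1)), uaux v (d+1) := by
    rw [Finset.sum_Ico_eq_sum_range]
    refine Finset.sum_congr rfl fun k hk => ?_
    rw [Eaux_symm, Eaux_abs_lt hv02 hv3 (by omega), show i + 1 + k - i = k + 1 by omega]
  rw [hsplit, hleft, hright]
  have := uaux_sum hv1 hv02 hS i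
  have := uaux_sum hv1 hv02 hS (n - (i+1))
  linarith

end Row

lemma posSemidef_of_dominant {N : Type*} [Fintype N] [DecidableEq N] (M : Matrix N N ℝ)
    (hsym : ∀ i j, M i j = M j i)
    (hdom : ∀ i, ∑ j ∈ Finset.univ.erase i, |M i j| ≤ M i i) : M.PosSemidef := by
  refine Matrix.PosSemidef.of_dotProduct_mulVec_nonneg ?_ ?_
  · exact Matrix.ext fun i j => by
      rw [Matrix.conjTranspose_apply, star_trivial, hsym]
  · intro x
    have hx : star x = x := funext fun i => star_trivial _
    rw [hx]
    have expand : dotProduct x (Matrix.mulVec M x) = ∑ i, ∑ j, x i * (M i j * x j) := by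
      simp [dotProduct, Matrix.mulVec, Finset.mul_sum]
    rw [expand]
    have split : ∀ i : N, ∑ j, x i * (M i j * x j)
        = x i * (M i i * x i) + ∑ j ∈ Finset.univ.erase i, x i * (M i j * x j) := by
      intro i
      rw [← Finset.add_sum_erase _ _ (Finset.mem_univ i)]
    rw [Finset.sum_congr rfl fun i _ => split i, Finset.sum_add_distrib]
    -- bound the off-diagonal part
    have key : ∀ i : N, ∀ j ∈ Finset.univ.erase i,
        -(|M i j| * (x i^2 + x j^2) / 2) ≤ x i * (M i j * x j) := by
      intro i j _
      have h1 : |x i * (M i j * x j)| ≤ |M i j| * (x i^2 + x j^2) / 2 := by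
        rw [abs_mul, abs_mul]
        have h2 : |x i| * |x j| ≤ (x i^2 + x j^2) / 2 := by
          nlinarith [sq_nonneg (|x i| - |x j|), sq_abs (x i), sq_abs (x j)]
        have h3 : (0:ℝ) ≤ |M i j| := abs_nonneg _
        calc |x i| * (|M i j| * |x j|) = |M i j| * (|x i| * |x j|) := by ring
          _ ≤ |M i j| * ((x i^2 + x j^2) / 2) := by
              exact mul_le_mul_of_nonneg_left h2 h3
          _ = |M i j| * (x i^2 + x j^2) / 2 := by ring
      linarith [neg_abs_le (x i * (M i j * x j))]
    have hoff : -∑ i, ∑ j ∈ Finset.univ.erase i, |M i j| * (x i^2 + x j^2) / 2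
        ≤ ∑ i, ∑ j ∈ Finset.univ.erase i, x i * (M i j * x j) := by
      rw [← Finset.sum_neg_distrib]
      refine Finset.sum_le_sum fun i _ => ?_
      rw [← Finset.sum_neg_distrib]
      exact Finset.sum_le_sum (key i)
    -- rewrite the double sum
    have hswap : ∑ i, ∑ j ∈ Finset.univ.erase i, |M i j| * x j^2
        = ∑ i, ∑ j ∈ Finset.univ.erase i, |M i j| * x i^2 := by
      rw [Finset.sum_comm' (t' := Finset.univ) (s' := fun j => Finset.univ.erase j)
        (fun i j => by simp [eq_comm, ne_comm, and_comm])]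
      exact Finset.sum_congr rfl fun i _ => Finset.sum_congr rfl fun j _ => by rw [hsym]
    have hsum : ∑ i, ∑ j ∈ Finset.univ.erase i, |M i j| * (x i^2 + x j^2) / 2
        = ∑ i, (∑ j ∈ Finset.univ.erase i, |M i j|) * x i^2 := by
      have : ∀ i : N, ∀ j : N, |M i j| * (x i^2 + x j^2) / 2
          = |M i j| * x i^2 / 2 + |M i j| * x j^2 / 2 := fun i j => by ring
      calc ∑ i, ∑ j ∈ Finset.univ.erase i, |M i j| * (x i^2 + x j^2) / 2
          = ∑ i, (∑ j ∈ Finset.univ.erase i, |M i j| * x i^2 / 2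
              + ∑ j ∈ Finset.univ.erase i, |M i j| * x j^2 / 2) := by
            refine Finset.sum_congr rfl fun i _ => ?_
            rw [← Finset.sum_add_distrib]
            exact Finset.sum_congr rfl fun j _ => this i j
        _ = ∑ i, ∑ j ∈ Finset.univ.erase i, |M i j| * x i^2 / 2
              + ∑ i, ∑ j ∈ Finset.univ.erase i, |M i j| * x j^2 / 2 := Finset.sum_add_distrib
        _ = ∑ i, (∑ j ∈ Finset.univ.erase i, |M i j|) * x i^2 := by
            have e1 : ∑ i, ∑ j ∈ Finset.univ.erase i, |M i j| * x j^2 / 2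
                = ∑ i, ∑ j ∈ Finset.univ.erase i, |M i j| * x i^2 / 2 := by
              have := hswap
              calc ∑ i, ∑ j ∈ Finset.univ.erase i, |M i j| * x j^2 / 2
                  = (∑ i, ∑ j ∈ Finset.univ.erase i, |M i j| * x j^2) / 2 := by
                    rw [Finset.sum_div]
                    exact Finset.sum_congr rfl fun i _ => by rw [Finset.sum_div]
                _ = (∑ i, ∑ j ∈ Finset.univ.erase i, |M i j| * x i^2) / 2 := by rw [hswap]
                _ = ∑ i, ∑ j ∈ Finset.univ.erase i, |M i j| * x i^2 / 2 := by
                    rw [Finset.sum_div]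
                    exact Finset.sum_congr rfl fun i _ => by rw [Finset.sum_div]
            rw [e1, ← Finset.sum_add_distrib]
            refine Finset.sum_congr rfl fun i _ => ?_
            rw [← Finset.sum_add_distrib, Finset.sum_mul]
            exact Finset.sum_congr rfl fun j _ => by ring
    have final : 0 ≤ ∑ i, (M i i * x i^2 - (∑ j ∈ Finset.univ.erase i, |M i j|) * x i^2) := by
      refine Finset.sum_nonneg fun i _ => ?_
      have := hdom i
      nlinarith [sq_nonneg (x i)]
    rw [Finset.sum_sub_distrib] at final
    have hdiag : ∑ i, x i * (M i i * x i) = ∑ i, M i i * x i^2 :=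
      Finset.sum_congr rfl fun i _ => by ring
    rw [hdiag]
    rw [hsum] at hoff
    linarith

lemma Eaux_neg (v : ℕ → ℝ) (i j : ℕ) : Eaux (fun k => -(v k)) i j = - Eaux v i j := by
  rw [Eaux, Eaux]
  split_ifs <;> ring

lemma Eaux_diag' (v : ℕ → ℝ) (i : ℕ) : Eaux v i i = v 1 + v 1 := by
  rw [Eaux, if_pos (by omega : i ≤ i+1), show i+1-i = 1 by omega]

lemma matD_apply (α β μα μβ : ℝ) (m : ℕ) (i j : Fin (m-1)) :
    matD α β μα μβ m i j = μα * Eaux (w α) (i:ℕ) (j:ℕ) + μβ * Eaux (w β) (i:ℕ) (j:ℕ) := by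
  simp [matD, wsgdMatrix, Eaux, Matrix.add_apply, Matrix.smul_apply, Matrix.transpose_apply,
    mul_add, smul_eq_mul]

lemma matD_posSemidef {α β μα μβ : ℝ} (hα0 : 0 < α) (hα1 : α < 1) (hβ1 : 1 < β) (hβ2 : β ≤ 2)
    (hμα : 0 ≤ μα) (hμβ : μβ < 0) (m : ℕ) :
    (matD α β μα μβ m).PosSemidef := by
  apply posSemidef_of_dominant
  · intro i j
    rw [matD_apply, matD_apply, Eaux_symm, Eaux_symm (v := w β)]
  · intro i
    -- convert erase-univ sums over Fin n to erase-range sums over ℕ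
    have conv1 : ∀ F : ℕ → ℝ, ∑ j ∈ Finset.univ.erase i, F ((j : Fin (m-1)) : ℕ)
        = ∑ j ∈ (Finset.range (m-1)).erase (i : ℕ), F j := by
      intro F
      rw [Finset.sum_erase_eq_sub (Finset.mem_univ i),
        Finset.sum_erase_eq_sub (Finset.mem_range.mpr i.isLt),
        Fin.sum_univ_eq_sum_range]
    -- pointwise bound
    have hpt : ∀ j : Fin (m-1), |matD α β μα μβ m i j|
        ≤ μα * |Eaux (w α) (i:ℕ) (j:ℕ)| + (-μβ) * |Eaux (w β) (i:ℕ) (j:ℕ)| := by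
      intro j
      rw [matD_apply]
      calc |μα * Eaux (w α) (i:ℕ) (j:ℕ) + μβ * Eaux (w β) (i:ℕ) (j:ℕ)|
          ≤ |μα * Eaux (w α) (i:ℕ) (j:ℕ)| + |μβ * Eaux (w β) (i:ℕ) (j:ℕ)| := abs_add_le _ _
        _ = μα * |Eaux (w α) (i:ℕ) (j:ℕ)| + (-μβ) * |Eaux (w β) (i:ℕ) (j:ℕ)| := by
            rw [abs_mul, abs_mul, abs_of_nonneg hμα, abs_of_neg hμβ]
    -- row bounds
    have hrowα : ∑ j ∈ (Finset.range (m-1)).erase (i:ℕ), |Eaux (w α) (i:ℕ) j| ≤ 2 * w α 1 :=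
      row_bound (w_alpha_one hα0 hα1) (w_alpha_02 hα0 hα1)
        (fun k hk => w_alpha_k hα0 hα1 hk) (fun k hk => w_alpha_sum hα0 hα1 k) i.isLt
    have hrowβ : ∑ j ∈ (Finset.range (m-1)).erase (i:ℕ), |Eaux (w β) (i:ℕ) j| ≤ 2 * (-(w β 1)) := by
      have hb := row_bound (v := fun k => -(w β k))
        (by simpa using w_beta_one hβ1 hβ2)
        (by have := w_beta_02 hβ1 hβ2; linarith)
        (fun k hk => by have := w_beta_k hβ1 hβ2 hk; linarith)
        (fun k hk => by
          rw [Finset.sum_neg_distrib]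
          have := w_beta_sum hβ1 hβ2 hk
          linarith) i.isLt
      calc ∑ j ∈ (Finset.range (m-1)).erase (i:ℕ), |Eaux (w β) (i:ℕ) j|
          = ∑ j ∈ (Finset.range (m-1)).erase (i:ℕ), |Eaux (fun k => -(w β k)) (i:ℕ) j| := by
            refine Finset.sum_congr rfl fun j _ => ?_
            rw [Eaux_neg, abs_neg]
        _ ≤ 2 * (-(w β 1)) := hb
    calc ∑ j ∈ Finset.univ.erase i, |matD α β μα μβ m i j|
        ≤ ∑ j ∈ Finset.univ.erase i,
            (μα * |Eaux (w α) (i:ℕ) (j:ℕ)| + (-μβ) * |Eaux (w β) (i:ℕ) (j:ℕ)|) :=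
          Finset.sum_le_sum fun j _ => hpt j
      _ = μα * ∑ j ∈ (Finset.range (m-1)).erase (i:ℕ), |Eaux (w α) (i:ℕ) j|
          + (-μβ) * ∑ j ∈ (Finset.range (m-1)).erase (i:ℕ), |Eaux (w β) (i:ℕ) j| := by
          rw [Finset.sum_add_distrib, ← Finset.mul_sum, ← Finset.mul_sum,
            conv1 (fun j => |Eaux (w α) (i:ℕ) j|), conv1 (fun j => |Eaux (w β) (i:ℕ) j|)]
      _ ≤ μα * (2 * w α 1) + (-μβ) * (2 * (-(w β 1))) := by
          have h1 : (0:ℝ) ≤ -μβ := by linarith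
          have hba : (0:ℝ) ≤ ∑ j ∈ (Finset.range (m-1)).erase (i:ℕ), |Eaux (w α) (i:ℕ) j| :=
            Finset.sum_nonneg fun j _ => abs_nonneg _
          nlinarith [hrowα, hrowβ]
      _ ≤ matD α β μα μβ m i i := by
          rw [matD_apply, Eaux_diag', Eaux_diag']
          ring_nf
          nlinarith []

lemma inner_toEuclideanCLM {k : ℕ} (M : Matrix (Fin k) (Fin k) ℝ) (x : EuclideanSpace ℝ (Fin k)) :
    (inner ℝ x ((Matrix.toEuclideanCLM (𝕜 := ℝ) M) x) : ℝ)
      = dotProduct (star (WithLp.equiv 2 (Fin k → ℝ) x))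
          (Matrix.mulVec M (WithLp.equiv 2 (Fin k → ℝ) x)) := by
  rw [EuclideanSpace.inner_eq_star_dotProduct, Matrix.ofLp_toEuclideanCLM, dotProduct_comm]
  rfl

lemma inner_nonneg_of_posSemidef {k : ℕ} {M : Matrix (Fin k) (Fin k) ℝ} (hM : M.PosSemidef)
    (x : EuclideanSpace ℝ (Fin k)) :
    0 ≤ (inner ℝ x ((Matrix.toEuclideanCLM (𝕜 := ℝ) M) x) : ℝ) := by
  rw [inner_toEuclideanCLM]
  exact hM.dotProduct_mulVec_nonneg _

lemma norm_bounds {k : ℕ} (D : Matrix (Fin k) (Fin k) ℝ) (hD : D.PosSemidef) :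
    IsUnit (1 + D) ∧ ‖Matrix.toEuclideanCLM (𝕜 := ℝ) (n := Fin k) ((1 + D)⁻¹)‖ ≤ 1 ∧
    ‖Matrix.toEuclideanCLM (𝕜 := ℝ) (n := Fin k) ((1 + D)⁻¹ * (1 - D))‖ ≤ 1 := by
  have hPD : (1 + D).PosDef := Matrix.PosDef.add_posSemidef Matrix.PosDef.one hD
  have hU : IsUnit (1 + D) := hPD.isUnit
  have hdet : IsUnit (1 + D).det := (Matrix.isUnit_iff_isUnit_det _).mp hU
  have hinv : (1 + D) * (1 + D)⁻¹ = 1 := Matrix.mul_nonsing_inv _ hdet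
  have hinv' : (1 + D)⁻¹ * (1 + D) = 1 := Matrix.nonsing_inv_mul _ hdet
  set Φ := Matrix.toEuclideanCLM (𝕜 := ℝ) (n := Fin k) with hΦ
  -- main reconstruction: for any y, with u := Φ (1+D)⁻¹ y, we have y = u + Φ D u
  have hrecon : ∀ y : EuclideanSpace ℝ (Fin k),
      y = Φ ((1+D)⁻¹) y + Φ D (Φ ((1+D)⁻¹) y) := by
    intro y
    have h1 : Φ ((1 + D) * (1 + D)⁻¹) = 1 := by rw [hinv, map_one]
    have h2 : Φ (1 + D) (Φ ((1+D)⁻¹) y) = y := by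
      rw [← ContinuousLinearMap.mul_apply, ← map_mul, h1, ContinuousLinearMap.one_apply]
    calc y = Φ (1 + D) (Φ ((1+D)⁻¹) y) := h2.symm
      _ = Φ ((1+D)⁻¹) y + Φ D (Φ ((1+D)⁻¹) y) := by
          rw [map_add, map_one, ContinuousLinearMap.add_apply, ContinuousLinearMap.one_apply]
  refine ⟨hU, ?_, ?_⟩
  · apply ContinuousLinearMap.opNorm_le_bound _ zero_le_one
    intro y
    rw [one_mul]
    set u := Φ ((1+D)⁻¹) y with hu
    have hy : y = u + Φ D u := hrecon y
    have hq : 0 ≤ (inner ℝ u (Φ D u) : ℝ) := inner_nonneg_of_posSemidef hD u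
    have h3 : ‖u‖^2 ≤ ‖u‖ * ‖y‖ := by
      have : (‖u‖:ℝ)^2 = inner ℝ u u := (real_inner_self_eq_norm_sq u).symm
      have h4 : (inner ℝ u y : ℝ) = inner ℝ u u + inner ℝ u (Φ D u) := by
        rw [hy, inner_add_right]
      have h5 : (inner ℝ u y : ℝ) ≤ ‖u‖ * ‖y‖ := real_inner_le_norm u y
      nlinarith [real_inner_self_eq_norm_sq u]
    nlinarith [norm_nonneg u, norm_nonneg y]
  · apply ContinuousLinearMap.opNorm_le_bound _ zero_le_one
    intro y
    rw [one_mul]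
    have hcomm : (1 + D)⁻¹ * (1 - D) = (1 - D) * (1 + D)⁻¹ := by
      have h1 : (1 - D) * (1 + D) = (1 + D) * (1 - D) := by noncomm_ring
      calc (1 + D)⁻¹ * (1 - D) = (1 + D)⁻¹ * (1 - D) * ((1 + D) * (1 + D)⁻¹) := by
            rw [hinv, mul_one]
        _ = (1 + D)⁻¹ * ((1 - D) * (1 + D)) * (1 + D)⁻¹ := by
            rw [mul_assoc, mul_assoc, mul_assoc]
        _ = (1 + D)⁻¹ * ((1 + D) * (1 - D)) * (1 + D)⁻¹ := by rw [h1]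
        _ = ((1 + D)⁻¹ * (1 + D)) * ((1 - D) * (1 + D)⁻¹) := by
            rw [mul_assoc, mul_assoc, mul_assoc]
        _ = (1 - D) * (1 + D)⁻¹ := by rw [hinv', one_mul]
    set u := Φ ((1+D)⁻¹) y with hu
    have hy : y = u + Φ D u := hrecon y
    have happ : Φ ((1 + D)⁻¹ * (1 - D)) y = u - Φ D u := by
      rw [hcomm, map_mul, ContinuousLinearMap.mul_apply, ← hu, map_sub, map_one,
        ContinuousLinearMap.sub_apply, ContinuousLinearMap.one_apply]
    rw [happ]
    have hq : 0 ≤ (inner ℝ u (Φ D u) : ℝ) := inner_nonneg_of_posSemidef hD u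
    have h1 : ‖u - Φ D u‖^2 = ‖u‖^2 - 2 * inner ℝ u (Φ D u) + ‖Φ D u‖^2 :=
      norm_sub_sq_real u (Φ D u)
    have h2 : ‖y‖^2 = ‖u‖^2 + 2 * inner ℝ u (Φ D u) + ‖Φ D u‖^2 := by
      rw [hy]; exact norm_add_sq_real u (Φ D u)
    nlinarith [norm_nonneg (u - Φ D u), norm_nonneg y]

theorem stmt_18 (α β μα μβ : ℝ) (hα0 : 0 < α) (hα1 : α < 1) (hβ1 : 1 < β) (hβ2 : β ≤ 2)
    (hμα : 0 ≤ μα) (hμβ : μβ < 0) (m : ℕ) (hm : 2 ≤ m) :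
    IsUnit (1 + matD α β μα μβ m) ∧
    ‖Matrix.toEuclideanCLM (𝕜 := ℝ) (n := Fin (m - 1)) ((1 + matD α β μα μβ m)⁻¹)‖ ≤ 1 ∧
    ‖Matrix.toEuclideanCLM (𝕜 := ℝ) (n := Fin (m - 1))
        ((1 + matD α β μα μβ m)⁻¹ * (1 - matD α β μα μβ m))‖ ≤ 1 := by
  exact norm_bounds _ (matD_posSemidef hα0 hα1 hβ1 hβ2 hμα hμβ m)
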